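/- Define ξ(x,t) = (x − t)/(α − λ), z(x,t) = e^{−ξ(x,t)} + √(e^{−2ξ(x,t)} + 1), and u₀(x,t) = 4 arctan(z(x,t)). Then u₀ satisfies the semilinear hyperbolic equation u₀,xx − u₀,tt − α u₀,t − λ u₀,x = sin u₀ at every point (x,t) ∈ ℝ² (the case γ = 0). -/

import Mathlib

open Real

noncomputable def fS (ξ : ℝ) : ℝ := 4 * arctan (exp (-ξ) + sqrt (exp (-2*ξ) + 1))

lemma sin_four_arctan (z : ℝ) :
    Real.sin (4 * arctan z) = 4*z*(1-z^2)/(1+z^2)^2 := by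
  have h : (4:ℝ) * arctan z = 2*(2*arctan z) := by ring
  rw [h, Real.sin_two_mul, Real.sin_two_mul, Real.cos_two_mul, Real.sin_arctan, Real.cos_arctan]
  have hpos : (0:ℝ) < 1 + z^2 := by positivity
  have hs : Real.sqrt (1+z^2) ^ 2 = 1+z^2 := Real.sq_sqrt hpos.le
  have hs0 : Real.sqrt (1+z^2) ≠ 0 := by positivity
  field_simp
  rw [show Real.sqrt (1+z^2) ^ 4 = (Real.sqrt (1+z^2) ^ 2)^2 by ring, hs]
  ring

lemma alg (g s : ℝ) (hs0 : 0 < s) (hgs : 0 < s + g) (hs2 : s^2 = g^2+1) :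
    4*(g+s)*(1-(g+s)^2)/(1+(g+s)^2)^2 = 4 * (1/(1+(g+s)^2) * (g*(-1) + g^2*(-2)/(2*s))) := by
  have e1 : 1+(g+s)^2 = 2*s*(s+g) := by linear_combination -hs2
  have e2 : 1-(g+s)^2 = -(2*g*(g+s)) := by linear_combination -hs2
  rw [e1, e2]
  have h1 : s ≠ 0 := hs0.ne'
  have h2 : s + g ≠ 0 := hgs.ne'
  field_simp
  ring

lemma key (ξ : ℝ) : HasDerivAt fS (Real.sin (fS ξ)) ξ := by
  set g := exp (-ξ) with hg
  have hg2 : exp (-2*ξ) = g^2 := by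
    rw [show -2*ξ = -ξ + -ξ by ring, Real.exp_add]; ring
  have hpos : (0:ℝ) < g^2 + 1 := by positivity
  set s := Real.sqrt (g^2+1) with hsdef
  have hs2 : s^2 = g^2+1 := Real.sq_sqrt hpos.le
  have hs0 : 0 < s := Real.sqrt_pos.mpr hpos
  have hgs : 0 < s + g := by nlinarith [sq_nonneg (s+g), Real.exp_pos (-ξ)]
  have h1 : HasDerivAt (fun x : ℝ => exp (-x)) (g * (-1)) ξ := (hasDerivAt_id ξ).neg.exp
  have h2 : HasDerivAt (fun x : ℝ => exp (-2*x) + 1) (exp (-2*ξ) * (-2)) ξ := by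
    have := (((hasDerivAt_id ξ).const_mul (-2)).exp).add_const 1
    simpa using this
  have h3 : HasDerivAt (fun x : ℝ => Real.sqrt (exp (-2*x) + 1))
      ((exp (-2*ξ) * (-2)) / (2 * Real.sqrt (exp (-2*ξ) + 1))) ξ := h2.sqrt (by positivity)
  have h4 := (h1.add h3).arctan.const_mul 4
  simp only [Pi.add_apply] at h4
  rw [hg2] at h4
  rw [← hg, ← hsdef] at h4
  refine h4.congr_deriv (Eq.symm ?_)
  show Real.sin (fS ξ) = _
  rw [fS, hg2, sin_four_arctan, ← hg, ← hsdef]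
  exact alg g s hs0 hgs hs2



/-- With ξ(x,t) = (x − t)/(α − λ),
z(x,t) = e^{−ξ(x,t)} + √(e^{−2ξ(x,t)} + 1) and u₀(x,t) = 4 arctan(z(x,t)),
u₀ satisfies u₀,xx − u₀,tt − α u₀,t − λ u₀,x = sin u₀ on ℝ² (case γ = 0). -/
theorem stmt15 (α lm : ℝ) (hne : α ≠ lm)
    (ξ z u₀ : ℝ → ℝ → ℝ)
    (hξ : ∀ x t : ℝ, ξ x t = (x - t) / (α - lm))
    (hz : ∀ x t : ℝ, z x t = Real.exp (-ξ x t) + Real.sqrt (Real.exp (-2 * ξ x t) + 1))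
    (hu : ∀ x t : ℝ, u₀ x t = 4 * Real.arctan (z x t)) :
    ∀ x t : ℝ,
      deriv (fun y => deriv (fun y' => u₀ y' t) y) x
        - deriv (fun s => deriv (fun s' => u₀ x s') s) t
        - α * deriv (fun s => u₀ x s) t
        - lm * deriv (fun y => u₀ y t) x
      = Real.sin (u₀ x t) := by
  have hc : α - lm ≠ 0 := sub_ne_zero.mpr hne
  have hu0 : ∀ x t : ℝ, u₀ x t = fS ((x - t)/(α - lm)) := by
    intro x t
    rw [hu, hz, hξ, fS]
  have hx : ∀ x t : ℝ, HasDerivAt (fun y => u₀ y t)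
      ((α - lm)⁻¹ * Real.sin (u₀ x t)) x := by
    intro x t
    have hin : HasDerivAt (fun y : ℝ => (y - t)/(α - lm)) ((α - lm)⁻¹) x := by
      simpa [one_div] using ((hasDerivAt_id x).sub_const t).div_const (α - lm)
    have h := (key ((x-t)/(α - lm))).comp x hin
    have heq : (fun y => u₀ y t) = fun y => fS ((y - t)/(α - lm)) :=
      funext fun y => hu0 y t
    rw [heq]
    exact h.congr_deriv (by rw [hu0]; ring)
  have ht : ∀ x t : ℝ, HasDerivAt (fun s => u₀ x s)
      (-(α - lm)⁻¹ * Real.sin (u₀ x t)) t := by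
    intro x t
    have hin : HasDerivAt (fun s : ℝ => (x - s)/(α - lm)) (-(α - lm)⁻¹) t := by
      have := (((hasDerivAt_id t).neg.add_const x)).div_const (α - lm)
      simpa [sub_eq_neg_add, one_div, neg_div] using this
    have h := (key ((x-t)/(α - lm))).comp t hin
    have heq : (fun s => u₀ x s) = fun s => fS ((x - s)/(α - lm)) :=
      funext fun s => hu0 x s
    rw [heq]
    exact h.congr_deriv (by rw [hu0]; ring)
  intro x t
  have hdx : ∀ t' : ℝ, deriv (fun y' => u₀ y' t') =
      fun x' => (α - lm)⁻¹ * Real.sin (u₀ x' t') :=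
    fun t' => funext fun x' => (hx x' t').deriv
  have hdt : ∀ x' : ℝ, deriv (fun s' => u₀ x' s') =
      fun t' => -(α - lm)⁻¹ * Real.sin (u₀ x' t') :=
    fun x' => funext fun t' => (ht x' t').deriv
  have hxx : deriv (fun y => deriv (fun y' => u₀ y' t) y) x =
      (α - lm)⁻¹ * (Real.cos (u₀ x t) * ((α - lm)⁻¹ * Real.sin (u₀ x t))) := by
    have : (fun y => deriv (fun y' => u₀ y' t) y) =
        fun y => (α - lm)⁻¹ * Real.sin (u₀ y t) := by
      funext y; rw [hdx t]
    rw [this]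
    exact (((Real.hasDerivAt_sin (u₀ x t)).comp x (hx x t)).const_mul ((α - lm)⁻¹)).deriv
  have htt : deriv (fun s => deriv (fun s' => u₀ x s') s) t =
      -(α - lm)⁻¹ * (Real.cos (u₀ x t) * (-(α - lm)⁻¹ * Real.sin (u₀ x t))) := by
    have : (fun s => deriv (fun s' => u₀ x s') s) =
        fun s => -(α - lm)⁻¹ * Real.sin (u₀ x s) := by
      funext s; rw [hdt x]
    rw [this]
    exact (((Real.hasDerivAt_sin (u₀ x t)).comp t (ht x t)).const_mul (-(α - lm)⁻¹)).deriv
  rw [hxx, htt, (hx x t).deriv, (ht x t).deriv]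
  field_simp
  ring
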